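/- Let V be a finite-dimensional real vector space, Q a symmetric bilinear form on V, e an element of V, and e₁, …, eₙ a basis of V satisfying: (i) writing e = a₁e₁ + ⋯ + aₙeₙ, one has aᵢ > 0 for all i; (ii) Q(x, e) ≤ 0 for all x ∈ V; (iii) Q(eᵢ, eⱼ) ≥ 0 for all i ≠ j; (iv) for any i ≠ j there is a finite sequence i₁, …, i_l with i₁ = i, i_l = j and Q(e_{i_t}, e_{i_{t+1}}) > 0 for all 1 ≤ t < l. If x ∈ V, x ≠ 0 and Q(x, x) = 0, then there is c ∈ ℝ with x = c • e, and moreover Q(y, e) = 0 for all y ∈ V. -/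

import Mathlib

/-- Sublemma in Appendix B (Zariski's lemma), equality case: if `Q x x = 0` for some
nonzero `x`, then `x` is proportional to `e` and `e` is in the radical of `Q`. -/
theorem stmt1 {V : Type*} [AddCommGroup V] [Module ℝ V] [FiniteDimensional ℝ V]
    (Q : V →ₗ[ℝ] V →ₗ[ℝ] ℝ) (hQsymm : ∀ x y, Q x y = Q y x)
    {n : ℕ} (b : Module.Basis (Fin n) ℝ V) (e : V)
    (hpos : ∀ i, 0 < b.repr e i)
    (hneg : ∀ x, Q x e ≤ 0)
    (hnonneg : ∀ i j : Fin n, i ≠ j → 0 ≤ Q (b i) (b j))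
    (hconn : ∀ i j : Fin n, i ≠ j → ∃ l : ℕ, ∃ c : Fin (l + 1) → Fin n,
      c 0 = i ∧ c (Fin.last l) = j ∧
      ∀ t : Fin l, 0 < Q (b (c t.castSucc)) (b (c t.succ)))
    (x : V) (hx : x ≠ 0) (hxx : Q x x = 0) :
    (∃ c : ℝ, x = c • e) ∧ ∀ y : V, Q y e = 0 := by
  classical
  set a : Fin n → ℝ := fun i => b.repr e i with ha
  set c : Fin n → ℝ := fun i => b.repr x i with hc
  set t : Fin n → ℝ := fun i => c i / a i with ht
  have hane : ∀ i, a i ≠ 0 := fun i => (hpos i).ne'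
  have hct : ∀ i, c i = t i * a i := fun i => (div_mul_cancel₀ _ (hane i)).symm
  -- general expansion of Q on basis representations
  have hexp : ∀ u v : V,
      Q u v = ∑ i, ∑ j, b.repr u i * (b.repr v j * Q (b i) (b j)) := by
    intro u v
    conv_lhs => rw [← b.sum_repr u, ← b.sum_repr v]
    simp only [map_sum, LinearMap.sum_apply, map_smul, LinearMap.smul_apply, smul_eq_mul,
      Finset.mul_sum]
    rw [Finset.sum_comm]
    exact Finset.sum_congr rfl fun i _ => Finset.sum_congr rfl fun j _ => by ring
  have hQie : ∀ i, Q (b i) e = ∑ j, a j * Q (b i) (b j) := by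
    intro i
    conv_lhs => rw [← b.sum_repr e]
    simp [-Module.Basis.sum_repr, map_sum, map_smul, smul_eq_mul, ha]
  set F : Fin n → Fin n → ℝ := fun i j => a i * a j * Q (b i) (b j) with hF
  have hFsymm : ∀ i j, F i j = F j i := by
    intro i j; simp only [hF]; rw [hQsymm]; ring
  -- Q x x in terms of t and F
  have h1 : Q x x = ∑ i, ∑ j, t i * t j * F i j := by
    rw [hexp]
    refine Finset.sum_congr rfl fun i _ => Finset.sum_congr rfl fun j _ => ?_
    show c i * (c j * Q (b i) (b j)) = t i * t j * F i j
    rw [hct i, hct j]; simp only [hF]; ring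
  -- split into S1 - D
  have hsplit : Q x x =
      (∑ i, ∑ j, t i ^ 2 * F i j) - ∑ i, ∑ j, (t i - t j) ^ 2 * F i j / 2 := by
    rw [h1]
    have hswap : ∑ i, ∑ j, t j ^ 2 * F i j = ∑ i, ∑ j, t i ^ 2 * F i j := by
      rw [Finset.sum_comm]
      exact Finset.sum_congr rfl fun i _ => Finset.sum_congr rfl fun j _ => by
        rw [hFsymm]
    have : ∑ i, ∑ j, t i * t j * F i j =
        (∑ i, ∑ j, t i ^ 2 * F i j) / 2 + (∑ i, ∑ j, t j ^ 2 * F i j) / 2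
          - ∑ i, ∑ j, (t i - t j) ^ 2 * F i j / 2 := by
      rw [Finset.sum_div, Finset.sum_div, ← Finset.sum_add_distrib,
        ← Finset.sum_sub_distrib]
      refine Finset.sum_congr rfl fun i _ => ?_
      rw [Finset.sum_div, Finset.sum_div, ← Finset.sum_add_distrib,
        ← Finset.sum_sub_distrib]
      exact Finset.sum_congr rfl fun j _ => by ring
    rw [this, hswap]; ring
  have hS1 : ∑ i, ∑ j, t i ^ 2 * F i j = ∑ i, t i ^ 2 * a i * Q (b i) e := by
    refine Finset.sum_congr rfl fun i _ => ?_
    rw [hQie i, Finset.mul_sum]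
    exact Finset.sum_congr rfl fun j _ => by simp only [hF]; ring
  -- sign facts
  have hS1nonpos : ∀ i, t i ^ 2 * a i * Q (b i) e ≤ 0 := fun i =>
    mul_nonpos_of_nonneg_of_nonpos (mul_nonneg (sq_nonneg _) (hpos i).le) (hneg _)
  have hDnonneg : ∀ i j, 0 ≤ (t i - t j) ^ 2 * F i j / 2 := by
    intro i j
    rcases eq_or_ne i j with rfl | hij
    · simp
    · have : 0 ≤ F i j :=
        mul_nonneg (mul_nonneg (hpos i).le (hpos j).le) (hnonneg i j hij)
      positivity
  -- both pieces vanish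
  have key : (∑ i, t i ^ 2 * a i * Q (b i) e) = 0 ∧
      (∑ i, ∑ j, (t i - t j) ^ 2 * F i j / 2) = 0 := by
    have hD0 : 0 ≤ ∑ i, ∑ j, (t i - t j) ^ 2 * F i j / 2 :=
      Finset.sum_nonneg fun i _ => Finset.sum_nonneg fun j _ => hDnonneg i j
    have hS0 : (∑ i, t i ^ 2 * a i * Q (b i) e) ≤ 0 :=
      Finset.sum_nonpos fun i _ => hS1nonpos i
    have heq : (∑ i, t i ^ 2 * a i * Q (b i) e)
        = ∑ i, ∑ j, (t i - t j) ^ 2 * F i j / 2 := by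
      have := hsplit; rw [hxx, hS1] at this; linarith
    constructor <;> linarith
  -- each S1 term vanishes
  have hterm1 : ∀ i, t i ^ 2 * a i * Q (b i) e = 0 := by
    intro i
    have := (Finset.sum_eq_zero_iff_of_nonpos (fun i _ => hS1nonpos i)).1 key.1
    exact this i (Finset.mem_univ i)
  -- each D term vanishes
  have hterm2 : ∀ i j, (t i - t j) ^ 2 * F i j / 2 = 0 := by
    intro i j
    have houter := (Finset.sum_eq_zero_iff_of_nonneg
      (fun i _ => Finset.sum_nonneg fun j _ => hDnonneg i j)).1 key.2
    have hinner := (Finset.sum_eq_zero_iff_of_nonneg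
      (fun j _ => hDnonneg i j)).1 (houter i (Finset.mem_univ i))
    exact hinner j (Finset.mem_univ j)
  -- t is constant along positive edges
  have hedge : ∀ i j, 0 < Q (b i) (b j) → t i = t j := by
    intro i j hQij
    have h2 := hterm2 i j
    have hF' : 0 < F i j := mul_pos (mul_pos (hpos i) (hpos j)) hQij
    have h3 : (t i - t j) ^ 2 * F i j = 0 := by linarith
    have h4 : (t i - t j) ^ 2 = 0 := (mul_eq_zero.1 h3).resolve_right hF'.ne'
    have := pow_eq_zero_iff (two_ne_zero) |>.1 h4
    linarith
  -- connectivity: t constant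
  have hteq : ∀ i j, t i = t j := by
    intro i j
    rcases eq_or_ne i j with rfl | hij
    · rfl
    obtain ⟨l, cs, h0, hl, hstep⟩ := hconn i j hij
    have hall : ∀ k : Fin (l + 1), t (cs 0) = t (cs k) := by
      intro k
      induction k using Fin.induction with
      | zero => rfl
      | succ k ih => rw [ih]; exact hedge _ _ (hstep k)
    have := hall (Fin.last l)
    rw [h0, hl] at this
    exact this
  -- x ≠ 0 gives a nonzero coordinate
  obtain ⟨i0, hi0⟩ : ∃ i, c i ≠ 0 := by
    by_contra h
    push_neg at h
    apply hx
    have h0 : b.repr x = 0 := Finsupp.ext fun i => h i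
    exact (LinearEquiv.map_eq_zero_iff b.repr).1 h0
  set r : ℝ := t i0 with hr
  have hrne : r ≠ 0 := by
    intro h
    apply hi0
    rw [hct i0, ← hr, h, zero_mul]
  have htall : ∀ i, t i = r := fun i => hteq i i0
  -- Q (b i) e = 0
  have hQbe : ∀ i, Q (b i) e = 0 := by
    intro i
    have h1 := hterm1 i
    have h2 : t i ^ 2 * a i ≠ 0 := by
      apply mul_ne_zero
      · rw [htall i]; positivity
      · exact hane i
    exact (mul_eq_zero.1 h1).resolve_left h2
  have hrad : ∀ y : V, Q y e = 0 := by
    intro y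
    conv_lhs => rw [← b.sum_repr y]
    simp [-Module.Basis.sum_repr, map_sum, map_smul, LinearMap.sum_apply, LinearMap.smul_apply, hQbe]
  refine ⟨⟨r, ?_⟩, hrad⟩
  apply b.ext_elem
  intro i
  rw [map_smul]
  simp only [Finsupp.smul_apply, smul_eq_mul]
  show c i = r * a i
  rw [hct i, htall i]
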